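/- Let G be a closed subgroup of ℝ^N containing a line ℝe for some unit vector e, and let f ∈ L^1(ℝ^N;[0,1]) satisfy ∑_{n=1}^{k} f(x + t_n e) ≤ 1 for almost every x, for all k ∈ ℕ and all distinct t_1, …, t_k ∈ (0,1). Then f = 0 almost everywhere. -/

import Mathlib

open MeasureTheory Set

theorem stmt_10 (N : ℕ)
    (G : AddSubgroup (EuclideanSpace ℝ (Fin N)))
    (hclosed : IsClosed (G : Set (EuclideanSpace ℝ (Fin N))))
    (e : EuclideanSpace ℝ (Fin N)) (he : ‖e‖ = 1)
    (hline : ∀ t : ℝ, t • e ∈ G)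
    (f : EuclideanSpace ℝ (Fin N) → ℝ)
    (hf : Integrable f) (hf01 : ∀ x, f x ∈ Set.Icc (0 : ℝ) 1)
    (hsum : ∀ (k : ℕ) (t : Fin k → ℝ), Function.Injective t →
      (∀ i, t i ∈ Set.Ioo (0 : ℝ) 1) →
      ∀ᵐ x : EuclideanSpace ℝ (Fin N), ∑ i, f (x + t i • e) ≤ 1) :
    f =ᵐ[volume] 0 := by
  have hf0 : ∀ x, 0 ≤ f x := fun x => (hf01 x).1
  set I := ∫ x, f x with hI
  have hI0 : 0 ≤ I := integral_nonneg hf0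
  have key : ∀ ε : ℝ, 0 < ε → I ≤ ε := by
    intro ε hε
    by_contra hlt
    push_neg at hlt
    have htend : Filter.Tendsto
        (fun n : ℕ => ∫ x in Metric.closedBall (0 : EuclideanSpace ℝ (Fin N)) n, f x)
        Filter.atTop (nhds I) := by
      have := tendsto_setIntegral_of_monotone
        (fun n : ℕ => measurableSet_closedBall (x := (0 : EuclideanSpace ℝ (Fin N))) (ε := n))
        (fun m n hmn => Metric.closedBall_subset_closedBall (by exact_mod_cast hmn))
        (hf.integrableOn
          (s := ⋃ n : ℕ, Metric.closedBall (0 : EuclideanSpace ℝ (Fin N)) n))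
      have hunion : (⋃ n : ℕ, Metric.closedBall (0 : EuclideanSpace ℝ (Fin N)) n)
          = Set.univ := by
        ext x
        simp only [Set.mem_iUnion, Metric.mem_closedBall, dist_zero_right, Set.mem_univ, iff_true]
        obtain ⟨n, hn⟩ := exists_nat_ge ‖x‖
        exact ⟨n, hn⟩
      rw [hunion] at this
      simpa [Measure.restrict_univ] using this
    obtain ⟨R, hR⟩ := (htend.eventually (eventually_gt_nhds (by linarith : I - ε < I))).exists
    set S := Metric.closedBall (0 : EuclideanSpace ℝ (Fin N)) (R + 1) with hSdef
    have hSmeas : volume S < ⊤ := measure_closedBall_lt_top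
    set C := (volume S).toReal with hC
    have hstep : ∀ t : ℝ, t ∈ Set.Ioo (0:ℝ) 1 →
        I - ε ≤ ∫ x in S, f (x + t • e) := by
      intro t ht
      have hmap : ∫ x in Metric.closedBall (0 : EuclideanSpace ℝ (Fin N)) R, f x
          = ∫ x in (fun x : EuclideanSpace ℝ (Fin N) => x + t • e) ⁻¹'
              Metric.closedBall (0 : EuclideanSpace ℝ (Fin N)) R, f (x + t • e) := by
        conv_lhs => rw [← map_add_right_eq_self (volume : Measure (EuclideanSpace ℝ (Fin N))) (t • e)]
        rw [(measurableEmbedding_addRight (t • e)).setIntegral_map]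
      have hsub : (fun x : EuclideanSpace ℝ (Fin N) => x + t • e) ⁻¹'
          Metric.closedBall (0 : EuclideanSpace ℝ (Fin N)) R ⊆ S := by
        intro x hx
        simp only [Set.mem_preimage, Metric.mem_closedBall, dist_zero_right, hSdef] at hx ⊢
        have hte : ‖t • e‖ = |t| := by rw [norm_smul, he, mul_one, Real.norm_eq_abs]
        have h1 : |t| ≤ 1 := by
          rw [abs_le]; exact ⟨by linarith [ht.1], le_of_lt ht.2⟩
        calc ‖x‖ = ‖x + t • e - t • e‖ := by rw [add_sub_cancel_right]
          _ ≤ ‖x + t • e‖ + ‖t • e‖ := norm_sub_le _ _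
          _ ≤ R + 1 := by rw [hte]; linarith
      have hint : Integrable (fun x : EuclideanSpace ℝ (Fin N) => f (x + t • e)) :=
        hf.comp_add_right (t • e)
      calc I - ε ≤ ∫ x in Metric.closedBall (0 : EuclideanSpace ℝ (Fin N)) R, f x := le_of_lt hR
        _ = _ := hmap
        _ ≤ ∫ x in S, f (x + t • e) := by
            apply setIntegral_mono_set hint.integrableOn
            · exact Filter.Eventually.of_forall (fun x => hf0 _)
            · exact Filter.Eventually.of_forall hsub
    have hbound : ∀ k : ℕ, (k : ℝ) * (I - ε) ≤ C := by
      intro k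
      set t : Fin k → ℝ := fun i => ((i : ℕ) + 1) / ((k : ℝ) + 1) with hts
      have hkpos : (0:ℝ) < (k : ℝ) + 1 := by positivity
      have htinj : Function.Injective t := by
        intro i j hij
        simp only [hts, div_eq_div_iff hkpos.ne' hkpos.ne'] at hij
        have h2 : ((i : ℕ) : ℝ) + 1 = ((j : ℕ) : ℝ) + 1 := mul_right_cancel₀ hkpos.ne' hij
        have : ((i : ℕ) : ℝ) = ((j : ℕ) : ℝ) := by linarith
        exact Fin.ext (by exact_mod_cast this)
      have htmem : ∀ i, t i ∈ Set.Ioo (0:ℝ) 1 := by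
        intro i
        refine ⟨by positivity, ?_⟩
        rw [div_lt_one hkpos]
        have : (i : ℕ) < k := i.isLt
        have : ((i : ℕ) : ℝ) + 1 < (k : ℝ) + 1 := by exact_mod_cast Nat.add_lt_add_right this 1
        linarith
      have hae := hsum k t htinj htmem
      have hintk : ∀ i : Fin k, Integrable (fun x : EuclideanSpace ℝ (Fin N) => f (x + t i • e)) :=
        fun i => hf.comp_add_right (t i • e)
      have hsum_int : ∫ x in S, (∑ i, f (x + t i • e)) = ∑ i, ∫ x in S, f (x + t i • e) :=
        integral_finset_sum _ (fun i _ => (hintk i).integrableOn)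
      have hle1 : ∫ x in S, (∑ i, f (x + t i • e)) ≤ ∫ _ in S, (1:ℝ) := by
        apply setIntegral_mono_ae
        · exact (integrable_finset_sum _ (fun i _ => hintk i)).integrableOn
        · exact integrableOn_const hSmeas.ne
        · exact hae
      have hconst : ∫ _ in S, (1:ℝ) = C := by
        rw [setIntegral_const, smul_eq_mul, mul_one]
        rfl
      calc (k : ℝ) * (I - ε) = ∑ _i : Fin k, (I - ε) := by
              rw [Finset.sum_const, Finset.card_univ, Fintype.card_fin, nsmul_eq_mul]
        _ ≤ ∑ i, ∫ x in S, f (x + t i • e) := Finset.sum_le_sum (fun i _ => hstep (t i) (htmem i))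
        _ = ∫ x in S, (∑ i, f (x + t i • e)) := hsum_int.symm
        _ ≤ ∫ _ in S, (1:ℝ) := hle1
        _ = C := hconst
    obtain ⟨k, hk⟩ := exists_nat_gt (C / (I - ε))
    have hIε : 0 < I - ε := by linarith
    have hb := hbound k
    rw [div_lt_iff₀ hIε] at hk
    linarith
  have hI_eq : I = 0 :=
    le_antisymm (le_of_forall_gt_imp_ge_of_dense (fun ε hε => key ε hε)) hI0
  exact (integral_eq_zero_iff_of_nonneg hf0 hf).mp hI_eq
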